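/- arXiv:2105.08868 — 2 statements merged into one kernel-verified Lean document; each statement's English description precedes it below -/
import Mathlib

section
/- (Lemma 2.) Under the mth-order Markov model, for every integer k with 1 ≤ k ≤ K − m − 1, the response indicator Rₖ is conditionally independent of O_{k+m+1} given (Ȳ^{m+1}_{k+1}, O̲ᵐₖ) = (Y_{max(1,k−m)},…,Yₖ, O_{k+1},…,O_{k+m}). -/
open scoped Classical BigOperators

namespace MRM

/-- Observed datum at index `j`: `some (y j)` if `r j = true` (observed), otherwise `none`
(missing, i.e. the value `?`). -/
def obs {K : ℕ} (y r : Fin K → Bool) (j : Fin K) : Option Bool :=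
  if r j then some (y j) else none

/-- Probability of an event under the joint pmf `p` on outcomes and response indicators. -/
noncomputable def Pr {K : ℕ} (p : (Fin K → Bool) → (Fin K → Bool) → ℝ)
    (E : (Fin K → Bool) → (Fin K → Bool) → Prop) : ℝ :=
  ∑ y : Fin K → Bool, ∑ r : Fin K → Bool, if E y r then p y r else 0

/-- Conditional probability `P(A | C)` under `p`. -/
noncomputable def cPr {K : ℕ} (p : (Fin K → Bool) → (Fin K → Bool) → ℝ)
    (A C : (Fin K → Bool) → (Fin K → Bool) → Prop) : ℝ :=
  Pr p (fun y r => A y r ∧ C y r) / Pr p C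

/-- Event: the outcomes at the 1-based positions `lo ≤ pos ≤ hi` take the values `yv pos`.
(If `hi < lo`, or the window is out of range, this is the trivial event, matching the
convention that a vector whose lower index exceeds its upper index is the null vector.) -/
def Yeq {K : ℕ} (lo hi : ℕ) (yv : ℕ → Bool) :
    (Fin K → Bool) → (Fin K → Bool) → Prop :=
  fun y _ => ∀ j : Fin K, lo ≤ j.1 + 1 → j.1 + 1 ≤ hi → y j = yv (j.1 + 1)

/-- Event: the response indicators at positions `lo ≤ pos ≤ hi` take the values `rv pos`. -/
def Req {K : ℕ} (lo hi : ℕ) (rv : ℕ → Bool) :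
    (Fin K → Bool) → (Fin K → Bool) → Prop :=
  fun _ r => ∀ j : Fin K, lo ≤ j.1 + 1 → j.1 + 1 ≤ hi → r j = rv (j.1 + 1)

/-- Event: the observed data at positions `lo ≤ pos ≤ hi` take the values `ov pos`. -/
def Oeq {K : ℕ} (lo hi : ℕ) (ov : ℕ → Option Bool) :
    (Fin K → Bool) → (Fin K → Bool) → Prop :=
  fun y r => ∀ j : Fin K, lo ≤ j.1 + 1 → j.1 + 1 ≤ hi → obs y r j = ov (j.1 + 1)

/-- The `m`-th order Markov model:
`p(y, r) = ∏ₖ aₖ(yₖ | ȳᵐₖ) · bₖ(rₖ | ȳᵐₖ, yₖ, o̲ᵐₖ)`, where `aₖ` and `bₖ` are strictly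
positive conditional pmfs in their first argument, `aₖ` depends only on the outcomes at
1-based positions `max(1, k − m), …, k`, and `bₖ` depends only on `rₖ`, the outcomes at
positions `max(1, k − m), …, k` and the observed data at positions `k + 1, …, min(k + m, K)`.
Indices of `Fin K` are 0-based, so the 1-based paper position of `k : Fin K` is `k.1 + 1`. -/
structure Markov (K m : ℕ) where
  p : (Fin K → Bool) → (Fin K → Bool) → ℝ
  a : Fin K → (Fin K → Bool) → ℝ
  b : Fin K → (Fin K → Bool) → (Fin K → Bool) → ℝ
  a_pos : ∀ k y, 0 < a k y
  b_pos : ∀ k y r, 0 < b k y r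
  a_pmf : ∀ (k : Fin K) (y : Fin K → Bool), ∑ v : Bool, a k (Function.update y k v) = 1
  b_pmf : ∀ (k : Fin K) (y r : Fin K → Bool), ∑ v : Bool, b k y (Function.update r k v) = 1
  a_local : ∀ (k : Fin K) (y y' : Fin K → Bool),
    (∀ j : Fin K, k.1 + 1 - m ≤ j.1 + 1 → j.1 ≤ k.1 → y j = y' j) → a k y = a k y'
  b_local : ∀ (k : Fin K) (y r y' r' : Fin K → Bool), r k = r' k →
    (∀ j : Fin K, k.1 + 1 - m ≤ j.1 + 1 → j.1 ≤ k.1 → y j = y' j) →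
    (∀ j : Fin K, k.1 < j.1 → j.1 + 1 ≤ k.1 + 1 + m → obs y r j = obs y' r' j) →
    b k y r = b k y' r'
  factor : ∀ y r, p y r = ∏ k : Fin K, a k y * b k y r
  sum_one : ∑ y : Fin K → Bool, ∑ r : Fin K → Bool, p y r = 1

/-- Real value of a binary outcome. -/
def yVal (v : Bool) : ℝ := if v then 1 else 0

/-- `cₖ(ȳᵐₖ, o̲ᵐₖ; α) = E[exp(α Yₖ) | Rₖ = 1, Ȳᵐₖ = ȳᵐₖ, O̲ᵐₖ = o̲ᵐₖ]` (`k` is 1-based). -/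
noncomputable def cfun {K : ℕ} (p : (Fin K → Bool) → (Fin K → Bool) → ℝ) (m : ℕ) (α : ℝ)
    (k : ℕ) (yv : ℕ → Bool) (ov : ℕ → Option Bool) : ℝ :=
  ∑ v : Bool, Real.exp (α * yVal v) *
    cPr p (Yeq k k (fun _ => v))
      (fun y r => Req k k (fun _ => true) y r ∧ Yeq (k - m) (k - 1) yv y r ∧
        Oeq (k + 1) (k + m) ov y r)

/-- The exponential tilting restriction with sensitivity parameters `α k` (`k` is 1-based):
`f(Yₖ | Rₖ = 0, Ȳᵐₖ, O̲ᵐₖ) = f(Yₖ | Rₖ = 1, Ȳᵐₖ, O̲ᵐₖ) · exp(αₖ Yₖ) / cₖ(Ȳᵐₖ, O̲ᵐₖ; αₖ)`. -/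
def Tilt {K : ℕ} (p : (Fin K → Bool) → (Fin K → Bool) → ℝ) (m : ℕ) (α : ℕ → ℝ) : Prop :=
  ∀ (k : ℕ), 1 ≤ k → k ≤ K → ∀ (yv : ℕ → Bool) (ov : ℕ → Option Bool),
    cPr p (Yeq k k yv)
      (fun y r => Req k k (fun _ => false) y r ∧ Yeq (k - m) (k - 1) yv y r ∧
        Oeq (k + 1) (k + m) ov y r)
    = cPr p (Yeq k k yv)
        (fun y r => Req k k (fun _ => true) y r ∧ Yeq (k - m) (k - 1) yv y r ∧
          Oeq (k + 1) (k + m) ov y r)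
      * Real.exp (α k * yVal (yv k)) / cfun p m (α k) k yv ov


/-! ### Auxiliary splicing machinery for Lemma 2 -/

/-- Splice: past (indices `< k`) from `x`, future from `x'`. -/
def spl {K : ℕ} (k : ℕ) (x x' : Fin K → Bool) : Fin K → Bool :=
  fun j => if j.1 < k then x j else x' j

lemma spl_lt {K k : ℕ} {x x' : Fin K → Bool} {j : Fin K} (h : j.1 < k) :
    spl k x x' j = x j := by simp [spl, h]

lemma spl_ge {K k : ℕ} {x x' : Fin K → Bool} {j : Fin K} (h : ¬ j.1 < k) :
    spl k x x' j = x' j := by simp [spl, h]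

lemma spl_spl {K : ℕ} (k : ℕ) (x x' : Fin K → Bool) :
    spl k (spl k x x') (spl k x' x) = x := by
  funext j; by_cases h : j.1 < k <;> simp [spl, h]

lemma obs_spl_lt {K k : ℕ} {y r y' r' : Fin K → Bool} {j : Fin K} (h : j.1 < k) :
    obs (spl k y y') (spl k r r') j = obs y r j := by simp [obs, spl, h]

lemma obs_spl_ge {K k : ℕ} {y r y' r' : Fin K → Bool} {j : Fin K} (h : ¬ j.1 < k) :
    obs (spl k y y') (spl k r r') j = obs y' r' j := by simp [obs, spl, h]

lemma Yeq_spl {K k lo hi : ℕ} (hhi : hi ≤ k) (yv : ℕ → Bool)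
    (y y' r₁ r₂ : Fin K → Bool) :
    Yeq lo hi yv (spl k y y') r₁ ↔ Yeq lo hi yv y r₂ := by
  constructor <;> intro h j h1 h2 <;> have hj : (j : ℕ) < k := by omega
  · have := h j h1 h2; rwa [spl_lt hj] at this
  · rw [spl_lt hj]; exact h j h1 h2

lemma Req_spl {K k lo hi : ℕ} (hhi : hi ≤ k) (rv : ℕ → Bool)
    (y₁ y₂ r r' : Fin K → Bool) :
    Req lo hi rv y₁ (spl k r r') ↔ Req lo hi rv y₂ r := by
  constructor <;> intro h j h1 h2 <;> have hj : (j : ℕ) < k := by omega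
  · have := h j h1 h2; rwa [spl_lt hj] at this
  · rw [spl_lt hj]; exact h j h1 h2

lemma Oeq_spl {K k lo hi : ℕ} (hlo : k + 1 ≤ lo) (ov : ℕ → Option Bool)
    (y y' r r' : Fin K → Bool) :
    Oeq lo hi ov (spl k y y') (spl k r r') ↔ Oeq lo hi ov y' r' := by
  constructor <;> intro h j h1 h2 <;> have hj : ¬ (j : ℕ) < k := by omega
  · have := h j h1 h2; rwa [obs_spl_ge hj] at this
  · rw [obs_spl_ge hj]; exact h j h1 h2

lemma Pr_mul_Pr {K : ℕ} (p : (Fin K → Bool) → (Fin K → Bool) → ℝ)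
    (E F : (Fin K → Bool) → (Fin K → Bool) → Prop) :
    Pr p E * Pr p F
      = ∑ z : ((Fin K → Bool) × (Fin K → Bool)) × ((Fin K → Bool) × (Fin K → Bool)),
          if E z.1.1 z.1.2 ∧ F z.2.1 z.2.2 then p z.1.1 z.1.2 * p z.2.1 z.2.2 else 0 := by
  rw [Pr, Pr, Finset.sum_mul_sum,
    Fintype.sum_prod_type (f := fun z : ((Fin K → Bool) × (Fin K → Bool)) × ((Fin K → Bool) × (Fin K → Bool)) =>
      if E z.1.1 z.1.2 ∧ F z.2.1 z.2.2 then p z.1.1 z.1.2 * p z.2.1 z.2.2 else 0)]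
  rw [Fintype.sum_prod_type]
  refine Finset.sum_congr rfl fun y _ => ?_
  simp only [Finset.sum_mul_sum]
  rw [Finset.sum_comm]
  refine Finset.sum_congr rfl fun r _ => ?_
  rw [Fintype.sum_prod_type (f := fun z2 : (Fin K → Bool) × (Fin K → Bool) =>
      if E ((y, r) : (Fin K → Bool) × (Fin K → Bool)).1 ((y, r)).2 ∧ F z2.1 z2.2 then
        p y r * p z2.1 z2.2 else 0)]
  refine Finset.sum_congr rfl fun y' _ => ?_
  refine Finset.sum_congr rfl fun r' _ => ?_
  by_cases h1 : E y r <;> by_cases h2 : F y' r' <;> simp [h1, h2]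

/-- Key factorization identity: splicing two configurations that agree with the fixed
values on the window `Y_{k-m..k}, O_{k+1..k+m}` preserves the product of probabilities. -/
lemma p_splice {K m : ℕ} (M : Markov K m) (k : ℕ) (yv : ℕ → Bool) (ovC : ℕ → Option Bool)
    (y r y' r' : Fin K → Bool)
    (hY : Yeq (k - m) k yv y r) (hO : Oeq (k + 1) (k + m) ovC y r)
    (hY' : Yeq (k - m) k yv y' r') (hO' : Oeq (k + 1) (k + m) ovC y' r') :
    M.p (spl k y y') (spl k r r') * M.p (spl k y' y) (spl k r' r) = M.p y r * M.p y' r' := by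
  rw [M.factor, M.factor, M.factor, M.factor, ← Finset.prod_mul_distrib,
    ← Finset.prod_mul_distrib]
  refine Finset.prod_congr rfl fun t _ => ?_
  by_cases ht : t.1 < k
  · have ha1 : M.a t (spl k y y') = M.a t y :=
      M.a_local t _ _ (fun j _ h2 => spl_lt (by omega))
    have ha2 : M.a t (spl k y' y) = M.a t y' :=
      M.a_local t _ _ (fun j _ h2 => spl_lt (by omega))
    have hb1 : M.b t (spl k y y') (spl k r r') = M.b t y r := by
      refine M.b_local t _ _ _ _ (spl_lt ht) (fun j _ h2 => spl_lt (by omega))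
        (fun j h1 h2 => ?_)
      by_cases hj : j.1 < k
      · exact obs_spl_lt hj
      · rw [obs_spl_ge hj]
        exact (hO' j (by omega) (by omega)).trans (hO j (by omega) (by omega)).symm
    have hb2 : M.b t (spl k y' y) (spl k r' r) = M.b t y' r' := by
      refine M.b_local t _ _ _ _ (spl_lt ht) (fun j _ h2 => spl_lt (by omega))
        (fun j h1 h2 => ?_)
      by_cases hj : j.1 < k
      · exact obs_spl_lt hj
      · rw [obs_spl_ge hj]
        exact (hO j (by omega) (by omega)).trans (hO' j (by omega) (by omega)).symm
    rw [ha1, ha2, hb1, hb2]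
  · have hy12 : ∀ j : Fin K, t.1 + 1 - m ≤ j.1 + 1 → j.1 ≤ t.1 → spl k y y' j = y' j := by
      intro j h1 h2
      by_cases hj : j.1 < k
      · rw [spl_lt hj, hY j (by omega) (by omega), hY' j (by omega) (by omega)]
      · exact spl_ge hj
    have hy21 : ∀ j : Fin K, t.1 + 1 - m ≤ j.1 + 1 → j.1 ≤ t.1 → spl k y' y j = y j := by
      intro j h1 h2
      by_cases hj : j.1 < k
      · rw [spl_lt hj, hY' j (by omega) (by omega), hY j (by omega) (by omega)]
      · exact spl_ge hj
    have ha1 : M.a t (spl k y y') = M.a t y' := M.a_local t _ _ hy12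
    have ha2 : M.a t (spl k y' y) = M.a t y := M.a_local t _ _ hy21
    have hb1 : M.b t (spl k y y') (spl k r r') = M.b t y' r' :=
      M.b_local t _ _ _ _ (spl_ge ht) hy12 (fun j h1 _ => obs_spl_ge (by omega))
    have hb2 : M.b t (spl k y' y) (spl k r' r) = M.b t y r :=
      M.b_local t _ _ _ _ (spl_ge ht) hy21 (fun j h1 _ => obs_spl_ge (by omega))
    rw [ha1, ha2, hb1, hb2]; ring

/-- **Lemma 2.** Under the `m`th-order Markov model, for every integer `k` with
`1 ≤ k ≤ K − m − 1`, the response indicator `Rₖ` is conditionally independent of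
`O_{k+m+1}` given `(Ȳ^{m+1}_{k+1}, O̲ᵐₖ) = (Y_{max(1,k−m)}, …, Yₖ, O_{k+1}, …, O_{k+m})`. -/
theorem statement2 (K m : ℕ) (hm : 1 ≤ m) (hKm : 2 * m + 1 < K) (M : Markov K m)
    (k : ℕ) (hk1 : 1 ≤ k) (hk2 : k ≤ K - m - 1)
    (rv : ℕ → Bool) (ovB : ℕ → Option Bool) (yv : ℕ → Bool) (ovC : ℕ → Option Bool)
    (hC : 0 < Pr M.p (fun y r => Yeq (k - m) k yv y r ∧ Oeq (k + 1) (k + m) ovC y r)) :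
    cPr M.p (fun y r => Req k k rv y r ∧ Oeq (k + m + 1) (k + m + 1) ovB y r)
        (fun y r => Yeq (k - m) k yv y r ∧ Oeq (k + 1) (k + m) ovC y r)
      = cPr M.p (Req k k rv)
          (fun y r => Yeq (k - m) k yv y r ∧ Oeq (k + 1) (k + m) ovC y r)
        * cPr M.p (Oeq (k + m + 1) (k + m + 1) ovB)
            (fun y r => Yeq (k - m) k yv y r ∧ Oeq (k + 1) (k + m) ovC y r) := by
  classical
  have key :
      Pr M.p (fun y r => (Req k k rv y r ∧ Oeq (k + m + 1) (k + m + 1) ovB y r) ∧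
          (Yeq (k - m) k yv y r ∧ Oeq (k + 1) (k + m) ovC y r)) *
        Pr M.p (fun y r => Yeq (k - m) k yv y r ∧ Oeq (k + 1) (k + m) ovC y r)
      = Pr M.p (fun y r => Req k k rv y r ∧
          (Yeq (k - m) k yv y r ∧ Oeq (k + 1) (k + m) ovC y r)) *
        Pr M.p (fun y r => Oeq (k + m + 1) (k + m + 1) ovB y r ∧
          (Yeq (k - m) k yv y r ∧ Oeq (k + 1) (k + m) ovC y r)) := by
    rw [Pr_mul_Pr, Pr_mul_Pr]
    refine Fintype.sum_equiv
      (Function.Involutive.toPerm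
        (fun z : ((Fin K → Bool) × (Fin K → Bool)) × ((Fin K → Bool) × (Fin K → Bool)) =>
          ((spl k z.1.1 z.2.1, spl k z.1.2 z.2.2), (spl k z.2.1 z.1.1, spl k z.2.2 z.1.2)))
        (show Function.Involutive _ from fun z => by simp [Prod.ext_iff, spl_spl]))
      _ _ (fun z => ?_)
    obtain ⟨⟨y, r⟩, y', r'⟩ := z
    simp only [Function.Involutive.coe_toPerm]
    have hiff :
        (((Req k k rv y r ∧ Oeq (k + m + 1) (k + m + 1) ovB y r) ∧
            (Yeq (k - m) k yv y r ∧ Oeq (k + 1) (k + m) ovC y r)) ∧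
          (Yeq (k - m) k yv y' r' ∧ Oeq (k + 1) (k + m) ovC y' r'))
        ↔ ((Req k k rv (spl k y y') (spl k r r') ∧
              (Yeq (k - m) k yv (spl k y y') (spl k r r') ∧
                Oeq (k + 1) (k + m) ovC (spl k y y') (spl k r r'))) ∧
            (Oeq (k + m + 1) (k + m + 1) ovB (spl k y' y) (spl k r' r) ∧
              (Yeq (k - m) k yv (spl k y' y) (spl k r' r) ∧
                Oeq (k + 1) (k + m) ovC (spl k y' y) (spl k r' r)))) := by
      rw [Req_spl (le_refl k) rv (spl k y y') y r r',
        Yeq_spl (le_refl k) yv y y' (spl k r r') r,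
        Oeq_spl (by omega) ovC y y' r r',
        Oeq_spl (by omega) ovB y' y r' r,
        Yeq_spl (le_refl k) yv y' y (spl k r' r) r',
        Oeq_spl (by omega) ovC y' y r' r]
      tauto
    by_cases h :
        ((Req k k rv y r ∧ Oeq (k + m + 1) (k + m + 1) ovB y r) ∧
            (Yeq (k - m) k yv y r ∧ Oeq (k + 1) (k + m) ovC y r)) ∧
          (Yeq (k - m) k yv y' r' ∧ Oeq (k + 1) (k + m) ovC y' r')
    · rw [if_pos h]
      exact (p_splice M k yv ovC y r y' r' h.1.2.1 h.1.2.2 h.2.1 h.2.2).symm.trans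
        (if_pos (hiff.mp h)).symm
    · rw [if_neg h]; exact (if_neg (fun h' => h (hiff.mpr h'))).symm
  have hD : Pr M.p (fun y r => Yeq (k - m) k yv y r ∧ Oeq (k + 1) (k + m) ovC y r) ≠ 0 :=
    ne_of_gt hC
  rw [cPr, cPr, cPr, div_mul_div_comm, div_eq_div_iff hD (mul_ne_zero hD hD)]
  linear_combination
    Pr M.p (fun y r => Yeq (k - m) k yv y r ∧ Oeq (k + 1) (k + m) ovC y r) * key

end MRM
end

section
/- (Lemma 3, observed-data expression.) Under the mth-order Markov model, for every integer k with 2 ≤ k ≤ K, f(Ȳᵐₖ, O̲^{m+2}_{k−1}) = [ f(O_{k+m+1} | Ȳᵐₖ, O̲^{m+1}_{k−1}, R̄ᵐₖ = 1) ]^{1(k ≤ K−m−1)} × { f(Ȳ^{m+1}ₖ, O̲^{m+1}_{k−1}) }^{1(k ≤ m+1)} × { Σ_{y_{k−m−1} ∈ {0,1}} f(Ȳ^{m+1}ₖ, O̲^{m+1}_{k−1}) }^{1(k > m+1)}, where R̄ᵐₖ = 1 denotes the event R_{max(1,k−m)} = ⋯ = R_{k−1} = 1, Ȳᵐₖ =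 (Y_{max(1,k−m)},…,Y_{k−1}), Ȳ^{m+1}ₖ = (Y_{max(1,k−m−1)},…,Y_{k−1}), O̲^{m+1}_{k−1} = (O_k,…,O_{min(k+m,K)}), O̲^{m+2}_{k−1} = (O_k,…,O_{min(k+m+1,K)}), and 1(·) is the indicator function (a factor with exponent 0 is omitted). -/
open scoped Classical BigOperators

namespace MRM

section Aux

variable {K m : ℕ}

lemma p_pos (M : Markov K m) (y r : Fin K → Bool) : 0 < M.p y r := by
  rw [M.factor]
  exact Finset.prod_pos fun i _ => mul_pos (M.a_pos i y) (M.b_pos i y r)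

lemma Pr_eq_sum (p : (Fin K → Bool) → (Fin K → Bool) → ℝ)
    (C : (Fin K → Bool) → (Fin K → Bool) → Prop) :
    Pr p C = ∑ z : (Fin K → Bool) × (Fin K → Bool),
      if C z.1 z.2 then p z.1 z.2 else 0 := by
  rw [Pr]
  exact (Fintype.sum_prod_type' (f := fun y r => if C y r then p y r else 0)).symm

lemma Pr_congr {p : (Fin K → Bool) → (Fin K → Bool) → ℝ}
    {C D : (Fin K → Bool) → (Fin K → Bool) → Prop}
    (h : ∀ y r, C y r ↔ D y r) : Pr p C = Pr p D := by
  unfold Pr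
  exact Finset.sum_congr rfl fun y _ => Finset.sum_congr rfl fun r _ =>
    if_congr (h y r) rfl rfl

lemma Pr_pos (M : Markov K m) {C : (Fin K → Bool) → (Fin K → Bool) → Prop}
    (hne : ∃ y r, C y r) : 0 < Pr M.p C := by
  obtain ⟨y0, r0, h0⟩ := hne
  rw [Pr_eq_sum]
  refine Finset.sum_pos' (fun z _ => ?_) ⟨(y0, r0), Finset.mem_univ _, ?_⟩
  · split
    · exact (p_pos M _ _).le
    · exact le_rfl
  · simpa [h0] using p_pos M y0 r0

/-- Splice: front (1-based positions `≤ k - 1`) from `f`, back from `g`. -/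
def sp (k : ℕ) {K : ℕ} (f g : Fin K → Bool) : Fin K → Bool :=
  fun j => if j.1 + 2 ≤ k then f j else g j

lemma sp_pos {k : ℕ} (f g : Fin K → Bool) {j : Fin K} (h : j.1 + 2 ≤ k) :
    sp k f g j = f j := if_pos h

lemma sp_neg {k : ℕ} (f g : Fin K → Bool) {j : Fin K} (h : ¬ j.1 + 2 ≤ k) :
    sp k f g j = g j := if_neg h

lemma sp_self (k : ℕ) (f : Fin K → Bool) : sp k f f = f :=
  funext fun j => by unfold sp; split <;> rfl

lemma sp_sp (k : ℕ) (f g f' g' : Fin K → Bool) :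
    sp k (sp k f g) (sp k f' g') = sp k f g' :=
  funext fun j => by by_cases h : j.1 + 2 ≤ k <;> simp [sp, h]

lemma obs_congr {y r y' r' : Fin K → Bool} {j : Fin K}
    (hy : y j = y' j) (hr : r j = r' j) : obs y r j = obs y' r' j := by
  simp [obs, hy, hr]

lemma Yeq_sp {k lo hi : ℕ} (hhi : hi + 1 ≤ k) {yv : ℕ → Bool}
    {y y' r r' : Fin K → Bool} (h : Yeq lo hi yv y r) :
    Yeq lo hi yv (sp k y y') r' := by
  intro j h1 h2
  rw [sp_pos _ _ (by omega)]
  exact h j h1 h2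

lemma Req_sp {k lo hi : ℕ} (hhi : hi + 1 ≤ k) {rv : ℕ → Bool}
    {y y' r r' : Fin K → Bool} (h : Req lo hi rv y r) :
    Req lo hi rv y' (sp k r r') := by
  intro j h1 h2
  rw [sp_pos _ _ (by omega)]
  exact h j h1 h2

lemma Oeq_sp {k lo hi : ℕ} (hlo : k ≤ lo) {ov : ℕ → Option Bool}
    {y y' r r' : Fin K → Bool} (h : Oeq lo hi ov y' r') :
    Oeq lo hi ov (sp k y y') (sp k r r') := by
  intro j h1 h2
  rw [obs_congr (sp_neg _ _ (by omega)) (sp_neg _ _ (by omega))]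
  exact h j h1 h2

lemma splice_p (M : Markov K m) (k : ℕ) (hk : 2 ≤ k) (yv : ℕ → Bool)
    (ov : ℕ → Option Bool) {y r y' r' : Fin K → Bool}
    (hY : Yeq (k - m) (k - 1) yv y r) (hY' : Yeq (k - m) (k - 1) yv y' r')
    (hO : Oeq k (k + m) ov y r) (hO' : Oeq k (k + m) ov y' r') :
    M.p (sp k y y') (sp k r r') =
      ∏ i : Fin K, if i.1 + 2 ≤ k then M.a i y * M.b i y r
        else M.a i y' * M.b i y' r' := by
  rw [M.factor]
  refine Finset.prod_congr rfl fun i _ => ?_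
  by_cases hi : i.1 + 2 ≤ k
  · rw [if_pos hi]
    have ha : M.a i (sp k y y') = M.a i y := by
      refine M.a_local i _ _ fun j h1 h2 => ?_
      exact sp_pos _ _ (by omega)
    have hb : M.b i (sp k y y') (sp k r r') = M.b i y r := by
      refine M.b_local i _ _ _ _ (sp_pos _ _ (by omega))
        (fun j h1 h2 => sp_pos _ _ (by omega)) ?_
      intro j hji hjm
      by_cases hj : j.1 + 2 ≤ k
      · exact obs_congr (sp_pos _ _ hj) (sp_pos _ _ hj)
      · rw [obs_congr (sp_neg _ _ hj) (sp_neg _ _ hj),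
          hO' j (by omega) (by omega)]
        exact (hO j (by omega) (by omega)).symm
    rw [ha, hb]
  · rw [if_neg hi]
    have hfix : ∀ j : Fin K, i.1 + 1 - m ≤ j.1 + 1 → j.1 ≤ i.1 →
        sp k y y' j = y' j := by
      intro j h1 h2
      by_cases hj : j.1 + 2 ≤ k
      · rw [sp_pos _ _ hj, hY j (by omega) (by omega)]
        exact (hY' j (by omega) (by omega)).symm
      · exact sp_neg _ _ hj
    have ha : M.a i (sp k y y') = M.a i y' := M.a_local i _ _ hfix
    have hb : M.b i (sp k y y') (sp k r r') = M.b i y' r' := by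
      refine M.b_local i _ _ _ _ (sp_neg _ _ (by omega)) hfix ?_
      intro j hji hjm
      exact obs_congr (sp_neg _ _ (by omega)) (sp_neg _ _ (by omega))
    rw [ha, hb]

lemma splice_mul (M : Markov K m) (k : ℕ) (hk : 2 ≤ k) (yv : ℕ → Bool)
    (ov : ℕ → Option Bool) {y r y' r' : Fin K → Bool}
    (hY : Yeq (k - m) (k - 1) yv y r) (hY' : Yeq (k - m) (k - 1) yv y' r')
    (hO : Oeq k (k + m) ov y r) (hO' : Oeq k (k + m) ov y' r') :
    M.p (sp k y y') (sp k r r') * M.p (sp k y' y) (sp k r' r)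
      = M.p y r * M.p y' r' := by
  rw [splice_p M k hk yv ov hY hY' hO hO', splice_p M k hk yv ov hY' hY hO' hO,
    M.factor, M.factor, ← Finset.prod_mul_distrib, ← Finset.prod_mul_distrib]
  refine Finset.prod_congr rfl fun i _ => ?_
  by_cases hi : i.1 + 2 ≤ k
  · rw [if_pos hi, if_pos hi]
  · rw [if_neg hi, if_neg hi]; ring

lemma ite_mul_ite {P Q : Prop} [Decidable P] [Decidable Q] (a b : ℝ) :
    (if P then a else 0) * (if Q then b else 0) = if P ∧ Q then a * b else 0 := by
  by_cases hP : P <;> by_cases hQ : Q <;> simp [hP, hQ]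

lemma prod_sum {α : Type*} [Fintype α] (f g : α → ℝ) :
    (∑ x, f x) * (∑ x, g x) = ∑ q : α × α, f q.1 * g q.2 := by
  rw [Finset.sum_mul_sum]
  exact (Fintype.sum_prod_type' (f := fun a b => f a * g b)).symm

/-- The pair-splicing involution. -/
def Phi (k : ℕ) {K : ℕ}
    (q : ((Fin K → Bool) × (Fin K → Bool)) × ((Fin K → Bool) × (Fin K → Bool))) :
    ((Fin K → Bool) × (Fin K → Bool)) × ((Fin K → Bool) × (Fin K → Bool)) :=
  ((sp k q.2.1 q.1.1, sp k q.2.2 q.1.2), (sp k q.1.1 q.2.1, sp k q.1.2 q.2.2))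

lemma Phi_invol (k : ℕ) : Function.Involutive (Phi k (K := K)) := by
  intro q
  simp [Phi, sp_sp, sp_self, Prod.ext_iff]

lemma key (M : Markov K m) (k : ℕ) (hk : 2 ≤ k) (yv : ℕ → Bool)
    (ov : ℕ → Option Bool) :
    Pr M.p (fun y r => (Yeq (k - m) (k - 1) yv y r ∧ Oeq k (k + m) ov y r) ∧
        Oeq (k + m + 1) (k + m + 1) ov y r) *
      Pr M.p (fun y r => Yeq (k - m) (k - 1) yv y r ∧ Oeq k (k + m) ov y r ∧
        Req (k - m) (k - 1) (fun _ => true) y r)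
    = Pr M.p (fun y r => Oeq (k + m + 1) (k + m + 1) ov y r ∧
        (Yeq (k - m) (k - 1) yv y r ∧ Oeq k (k + m) ov y r ∧
          Req (k - m) (k - 1) (fun _ => true) y r)) *
      Pr M.p (fun y r => Yeq (k - m) (k - 1) yv y r ∧ Oeq k (k + m) ov y r) := by
  rw [Pr_eq_sum, Pr_eq_sum, Pr_eq_sum, Pr_eq_sum, prod_sum, prod_sum]
  refine Fintype.sum_bijective (Phi k) (Phi_invol k).bijective _ _ fun q => ?_
  obtain ⟨⟨y, r⟩, ⟨y', r'⟩⟩ := q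
  rw [show Phi k ((y, r), y', r') = ((sp k y' y, sp k r' r), (sp k y y', sp k r r')) from rfl]
  simp only [ite_mul_ite]
  have hiff :
      (((Yeq (k - m) (k - 1) yv y r ∧ Oeq k (k + m) ov y r) ∧
          Oeq (k + m + 1) (k + m + 1) ov y r) ∧
        (Yeq (k - m) (k - 1) yv y' r' ∧ Oeq k (k + m) ov y' r' ∧
          Req (k - m) (k - 1) (fun _ => true) y' r'))
      ↔ ((Oeq (k + m + 1) (k + m + 1) ov (sp k y' y) (sp k r' r) ∧
            (Yeq (k - m) (k - 1) yv (sp k y' y) (sp k r' r) ∧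
              Oeq k (k + m) ov (sp k y' y) (sp k r' r) ∧
              Req (k - m) (k - 1) (fun _ => true) (sp k y' y) (sp k r' r))) ∧
          (Yeq (k - m) (k - 1) yv (sp k y y') (sp k r r') ∧
            Oeq k (k + m) ov (sp k y y') (sp k r r'))) := by
    constructor
    · rintro ⟨⟨⟨hYz, hWz⟩, hAz⟩, hYw, hWw, hRw⟩
      exact ⟨⟨Oeq_sp (by omega) hAz,
        Yeq_sp (by omega) hYw, Oeq_sp le_rfl hWz, Req_sp (by omega) hRw⟩,
        Yeq_sp (by omega) hYz, Oeq_sp le_rfl hWw⟩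
    · rintro ⟨⟨hA1, hY1, hW1, hR1⟩, hY2, hW2⟩
      have hYz : Yeq (k - m) (k - 1) yv y r := by
        intro j h1 h2
        have h := hY2 j h1 h2
        rwa [sp_pos _ _ (by omega)] at h
      have hWz : Oeq k (k + m) ov y r := by
        intro j h1 h2
        have h := hW1 j h1 h2
        rwa [obs_congr (sp_neg _ _ (by omega)) (sp_neg _ _ (by omega))] at h
      have hAz : Oeq (k + m + 1) (k + m + 1) ov y r := by
        intro j h1 h2
        have h := hA1 j h1 h2
        rwa [obs_congr (sp_neg _ _ (by omega)) (sp_neg _ _ (by omega))] at h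
      have hYw : Yeq (k - m) (k - 1) yv y' r' := by
        intro j h1 h2
        have h := hY1 j h1 h2
        rwa [sp_pos _ _ (by omega)] at h
      have hWw : Oeq k (k + m) ov y' r' := by
        intro j h1 h2
        have h := hW2 j h1 h2
        rwa [obs_congr (sp_neg _ _ (by omega)) (sp_neg _ _ (by omega))] at h
      have hRw : Req (k - m) (k - 1) (fun _ => true) y' r' := by
        intro j h1 h2
        have h := hR1 j h1 h2
        rwa [sp_pos _ _ (by omega)] at h
      exact ⟨⟨⟨hYz, hWz⟩, hAz⟩, hYw, hWw, hRw⟩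
  by_cases hL : ((Yeq (k - m) (k - 1) yv y r ∧ Oeq k (k + m) ov y r) ∧
        Oeq (k + m + 1) (k + m + 1) ov y r) ∧
      (Yeq (k - m) (k - 1) yv y' r' ∧ Oeq k (k + m) ov y' r' ∧
        Req (k - m) (k - 1) (fun _ => true) y' r')
  · rw [if_pos hL, if_pos (hiff.mp hL)]
    obtain ⟨⟨⟨hYz, hWz⟩, _⟩, hYw, hWw, _⟩ := hL
    rw [splice_mul M k hk yv ov hYw hYz hWw hWz]
    exact (mul_comm _ _)
  · rw [if_neg hL, if_neg fun h => hL (hiff.mpr h)]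

lemma Bsum (M : Markov K m) (k : ℕ) (hm : 1 ≤ m) (hk : m + 1 < k) (hkK : k ≤ K)
    (yv : ℕ → Bool) (ov : ℕ → Option Bool) :
    (∑ v : Bool, Pr M.p (fun y r =>
        Yeq (k - m - 1) (k - 1) (Function.update yv (k - m - 1) v) y r ∧
          Oeq k (k + m) ov y r))
    = Pr M.p (fun y r => Yeq (k - m) (k - 1) yv y r ∧ Oeq k (k + m) ov y r) := by
  simp only [Pr_eq_sum]
  rw [Finset.sum_comm]
  refine Finset.sum_congr rfl fun z _ => ?_
  have hj0 : k - m - 2 < K := by omega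
  set j0 : Fin K := ⟨k - m - 2, hj0⟩ with hj0def
  have hj0v : (j0 : Fin K).1 + 1 = k - m - 1 := by
    simp [hj0def]; omega
  have hcond : ∀ v : Bool,
      (Yeq (k - m - 1) (k - 1) (Function.update yv (k - m - 1) v) z.1 z.2 ∧
        Oeq k (k + m) ov z.1 z.2)
      ↔ ((Yeq (k - m) (k - 1) yv z.1 z.2 ∧ Oeq k (k + m) ov z.1 z.2) ∧
          z.1 j0 = v) := by
    intro v
    constructor
    · rintro ⟨hY, hW⟩
      have hy0 : z.1 j0 = v := by
        have h := hY j0 (by omega) (by omega)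
        rwa [hj0v, Function.update_self] at h
      refine ⟨⟨fun j h1 h2 => ?_, hW⟩, hy0⟩
      have h := hY j (by omega) h2
      rwa [Function.update_of_ne (by omega)] at h
    · rintro ⟨⟨hY, hW⟩, hv⟩
      refine ⟨fun j h1 h2 => ?_, hW⟩
      by_cases hj : j.1 + 1 = k - m - 1
      · have hjj : j = j0 := Fin.ext (by omega)
        rw [hjj, hj0v, Function.update_self]
        exact hv
      · rw [Function.update_of_ne hj]
        exact hY j (by omega) h2
  simp only [hcond]
  rw [Fintype.sum_bool]
  by_cases hP : (Yeq (k - m) (k - 1) yv z.1 z.2 ∧ Oeq k (k + m) ov z.1 z.2)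
  · cases hy : z.1 j0 <;> simp [hP, hy]
  · simp [hP]

lemma exists_mem (k : ℕ) (hk : 2 ≤ k) (yv : ℕ → Bool) (ov : ℕ → Option Bool) :
    ∃ y r : Fin K → Bool, Yeq (k - m) (k - 1) yv y r ∧ Oeq k (k + m) ov y r ∧
      Req (k - m) (k - 1) (fun _ => true) y r := by
  refine ⟨fun j => if j.1 + 1 ≤ k - 1 then yv (j.1 + 1) else (ov (j.1 + 1)).getD false,
    fun j => if j.1 + 1 ≤ k - 1 then true else (ov (j.1 + 1)).isSome, ?_, ?_, ?_⟩
  · intro j h1 h2; simp [h2]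
  · intro j h1 h2
    have hj : ¬ (j.1 + 1 ≤ k - 1) := by omega
    cases h : ov (j.1 + 1) <;> simp [obs, h, hj]
  · intro j h1 h2; simp [h2]

end Aux

/-- **Lemma 3, observed-data expression.** Under the `m`th-order Markov model, for every
`2 ≤ k ≤ K`,
`f(Ȳᵐₖ, O̲^{m+2}_{k−1})
  = [f(O_{k+m+1} | Ȳᵐₖ, O̲^{m+1}_{k−1}, R̄ᵐₖ = 1)]^{1(k ≤ K−m−1)}
    × {f(Ȳ^{m+1}ₖ, O̲^{m+1}_{k−1})}^{1(k ≤ m+1)}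
    × {Σ_{y_{k−m−1}} f(Ȳ^{m+1}ₖ, O̲^{m+1}_{k−1})}^{1(k > m+1)}`,
with `O̲^{m+1}_{k−1} = (O_k, …, O_{min(k+m,K)})` and `O̲^{m+2}_{k−1} = (O_k, …, O_{min(k+m+1,K)})`
(truncation at `K` is automatic in `Oeq`). -/
theorem statement4 (K m : ℕ) (hm : 1 ≤ m) (hKm : 2 * m + 1 < K) (M : Markov K m)
    (k : ℕ) (hk1 : 2 ≤ k) (hk2 : k ≤ K) (yv : ℕ → Bool) (ov : ℕ → Option Bool) :
    Pr M.p (fun y r => Yeq (k - m) (k - 1) yv y r ∧ Oeq k (k + m + 1) ov y r)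
      = (if k ≤ K - m - 1 then
            cPr M.p (Oeq (k + m + 1) (k + m + 1) ov)
              (fun y r => Yeq (k - m) (k - 1) yv y r ∧ Oeq k (k + m) ov y r ∧
                Req (k - m) (k - 1) (fun _ => true) y r)
          else 1)
        * (if k ≤ m + 1 then
             Pr M.p (fun y r => Yeq (k - m - 1) (k - 1) yv y r ∧ Oeq k (k + m) ov y r)
           else
             ∑ v : Bool,
               Pr M.p (fun y r =>
                 Yeq (k - m - 1) (k - 1) (Function.update yv (k - m - 1) v) y r ∧
                   Oeq k (k + m) ov y r)) := by
  have hB : (if k ≤ m + 1 then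
        Pr M.p (fun y r => Yeq (k - m - 1) (k - 1) yv y r ∧ Oeq k (k + m) ov y r)
      else
        ∑ v : Bool,
          Pr M.p (fun y r =>
            Yeq (k - m - 1) (k - 1) (Function.update yv (k - m - 1) v) y r ∧
              Oeq k (k + m) ov y r))
      = Pr M.p (fun y r => Yeq (k - m) (k - 1) yv y r ∧ Oeq k (k + m) ov y r) := by
    by_cases hkm : k ≤ m + 1
    · rw [if_pos hkm]
      refine Pr_congr fun y r => ?_
      constructor
      · rintro ⟨h1, h2⟩; exact ⟨fun j a b => h1 j (by omega) b, h2⟩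
      · rintro ⟨h1, h2⟩; exact ⟨fun j a b => h1 j (by omega) b, h2⟩
    · rw [if_neg hkm]
      exact Bsum M k hm (by omega) hk2 yv ov
  rw [hB]
  by_cases hkK : k ≤ K - m - 1
  · rw [if_pos hkK]
    have hCpos : 0 < Pr M.p (fun y r => Yeq (k - m) (k - 1) yv y r ∧
        Oeq k (k + m) ov y r ∧ Req (k - m) (k - 1) (fun _ => true) y r) :=
      Pr_pos M (exists_mem k hk1 yv ov)
    have hLHS : Pr M.p (fun y r => Yeq (k - m) (k - 1) yv y r ∧
          Oeq k (k + m + 1) ov y r)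
        = Pr M.p (fun y r => (Yeq (k - m) (k - 1) yv y r ∧
            Oeq k (k + m) ov y r) ∧ Oeq (k + m + 1) (k + m + 1) ov y r) := by
      refine Pr_congr fun y r => ?_
      constructor
      · rintro ⟨h1, h2⟩
        exact ⟨⟨h1, fun j a b => h2 j a (by omega)⟩, fun j a b => h2 j (by omega) b⟩
      · rintro ⟨⟨h1, h2⟩, h3⟩
        refine ⟨h1, fun j a b => ?_⟩
        by_cases hj : j.1 + 1 ≤ k + m
        · exact h2 j a hj
        · exact h3 j (by omega) b
    rw [hLHS]
    simp only [cPr]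
    rw [div_mul_eq_mul_div, eq_div_iff hCpos.ne']
    exact key M k hk1 yv ov
  · rw [if_neg hkK, one_mul]
    refine Pr_congr fun y r => ?_
    constructor
    · rintro ⟨h1, h2⟩; exact ⟨h1, fun j a b => h2 j a (by omega)⟩
    · rintro ⟨h1, h2⟩
      refine ⟨h1, fun j a b => ?_⟩
      have hjK : j.1 < K := j.2
      exact h2 j a (by omega)

end MRM
end
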